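/- Let S₁ and S₂ be two (real or complex) n×n matrices that are semisimple (diagonalizable over ℂ) and such that every eigenvalue λ + iμ of S₁ and of S₂ satisfies −π < μ ≤ π. If exp(S₁) = exp(S₂), then S₁ = S₂. -/

import Mathlib

open Matrix

/-- A complex square matrix is semisimple iff it is diagonalizable over `ℂ`. -/
def IsSemisimpleMatC {n : ℕ} (S : Matrix (Fin n) (Fin n) ℂ) : Prop :=
  ∃ P D : Matrix (Fin n) (Fin n) ℂ, IsUnit P ∧ D.IsDiag ∧ S = P * D * P⁻¹

/-- A real square matrix is semisimple iff it is diagonalizable over `ℂ`. -/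
def IsSemisimpleMatR {n : ℕ} (S : Matrix (Fin n) (Fin n) ℝ) : Prop :=
  IsSemisimpleMatC (S.map (algebraMap ℝ ℂ))

/-- `z` is a (complex) eigenvalue of the complex matrix `S`. -/
def eigC {n : ℕ} (S : Matrix (Fin n) (Fin n) ℂ) (z : ℂ) : Prop :=
  S.charpoly.IsRoot z

/-- `z` is a (complex) eigenvalue of the real matrix `S`. -/
def eigR {n : ℕ} (S : Matrix (Fin n) (Fin n) ℝ) (z : ℂ) : Prop :=
  (S.charpoly.map (algebraMap ℝ ℂ)).IsRoot z

section ExpInjAux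

open Polynomial

lemma conj_pow_aux {A : Type*} [Ring A] (u : Aˣ) (x : A) (k : ℕ) :
    ((u : A) * x * (↑u⁻¹ : A)) ^ k = ↑u * x ^ k * (↑u⁻¹ : A) := by
  induction k with
  | zero => simp
  | succ k ih => rw [pow_succ, pow_succ, ih]; simp [mul_assoc]

lemma aeval_conj_aux {A : Type*} [Ring A] [Algebra ℂ A] (u : Aˣ) (x : A) (p : ℂ[X]) :
    aeval ((u : A) * x * (↑u⁻¹ : A)) p = ↑u * aeval x p * (↑u⁻¹ : A) := by
  induction p using Polynomial.induction_on' with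
  | add p q hp hq => simp [hp, hq, mul_add, add_mul]
  | monomial k a =>
    simp only [aeval_monomial, conj_pow_aux, ← mul_assoc, Algebra.commutes]
    rw [mul_assoc (↑u : A) ((algebraMap ℂ A) a) (x ^ k), Algebra.commutes, ← mul_assoc]

lemma aeval_diagonal_aux {n : ℕ} (w : Fin n → ℂ) (p : ℂ[X]) :
    aeval (Matrix.diagonal w) p = Matrix.diagonal (fun i => p.eval (w i)) := by
  induction p using Polynomial.induction_on' with
  | add p q hp hq => simp [hp, hq, Matrix.diagonal_add]
  | monomial k a =>
    simp [aeval_monomial, Matrix.diagonal_pow, Matrix.algebraMap_eq_diagonal,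
      Matrix.diagonal_mul_diagonal, eval_monomial, mul_comm]

lemma eval_charpoly_aux {n : ℕ} (M : Matrix (Fin n) (Fin n) ℂ) (z : ℂ) :
    M.charpoly.eval z = (Matrix.diagonal (fun _ => z) - M).det := by
  rw [Matrix.charpoly, eval_det, matPolyEquiv_charmatrix]
  congr 1
  rw [eval_sub, eval_X, eval_C, Matrix.scalar_apply]

lemma scalar_conj_aux {n : ℕ} (u : (Matrix (Fin n) (Fin n) ℂ)ˣ) (z : ℂ) :
    (u : Matrix (Fin n) (Fin n) ℂ) * Matrix.diagonal (fun _ => z) * (↑(u⁻¹) : Matrix (Fin n) (Fin n) ℂ)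
      = Matrix.diagonal (fun _ => z) := by
  have h : Matrix.diagonal (fun _ : Fin n => z)
      = algebraMap ℂ (Matrix (Fin n) (Fin n) ℂ) z := by
    rw [Matrix.algebraMap_eq_diagonal]
    rfl
  rw [h, ← Algebra.commutes, mul_assoc]
  norm_cast
  simp

lemma diag_root_aux {n : ℕ} (u : (Matrix (Fin n) (Fin n) ℂ)ˣ) (d : Fin n → ℂ) (i : Fin n) :
    ((u : Matrix (Fin n) (Fin n) ℂ) * Matrix.diagonal d * (↑(u⁻¹) : Matrix (Fin n) (Fin n) ℂ)).charpoly.IsRoot (d i) := by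
  rw [Polynomial.IsRoot, eval_charpoly_aux]
  have h : Matrix.diagonal (fun _ => d i)
        - (u : Matrix (Fin n) (Fin n) ℂ) * Matrix.diagonal d * (↑(u⁻¹) : Matrix (Fin n) (Fin n) ℂ)
      = (↑u : Matrix (Fin n) (Fin n) ℂ) * (Matrix.diagonal (fun _ => d i) - Matrix.diagonal d) * (↑(u⁻¹) : Matrix (Fin n) (Fin n) ℂ) := by
    rw [Matrix.mul_sub, Matrix.sub_mul, scalar_conj_aux]
  rw [h, Matrix.det_units_conj, Matrix.diagonal_sub, Matrix.det_diagonal]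
  exact Finset.prod_eq_zero (Finset.mem_univ i) (by simp)

/-- decompose a semisimple matrix -/
lemma semisimple_decomp {n : ℕ} {S : Matrix (Fin n) (Fin n) ℂ} (h : IsSemisimpleMatC S) :
    ∃ (u : (Matrix (Fin n) (Fin n) ℂ)ˣ) (d : Fin n → ℂ),
      S = (↑u : Matrix (Fin n) (Fin n) ℂ) * Matrix.diagonal d * (↑(u⁻¹) : Matrix (Fin n) (Fin n) ℂ) := by
  obtain ⟨P, D, hP, hD, hS⟩ := h
  obtain ⟨d, hDd⟩ : ∃ d : Fin n → ℂ, D = Matrix.diagonal d := by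
    refine ⟨fun i => D i i, ?_⟩
    ext i j
    by_cases hij : i = j
    · subst hij; simp
    · rw [Matrix.diagonal_apply_ne _ hij]; exact hD hij
  exact ⟨hP.unit, d, by rw [hS, hDd, Matrix.coe_units_inv, IsUnit.unit_spec]⟩

lemma complex_case {n : ℕ} (S₁ S₂ : Matrix (Fin n) (Fin n) ℂ)
    (h₁ : IsSemisimpleMatC S₁) (h₂ : IsSemisimpleMatC S₂)
    (he₁ : ∀ z : ℂ, eigC S₁ z → -Real.pi < z.im ∧ z.im ≤ Real.pi)
    (he₂ : ∀ z : ℂ, eigC S₂ z → -Real.pi < z.im ∧ z.im ≤ Real.pi)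
    (hexp : NormedSpace.exp S₁ = NormedSpace.exp S₂) : S₁ = S₂ := by
  obtain ⟨u₁, d₁, hS₁⟩ := semisimple_decomp h₁
  obtain ⟨u₂, d₂, hS₂⟩ := semisimple_decomp h₂
  set cp : ℂ[X] := S₁.charpoly * S₂.charpoly with hcp
  have hcp0 : cp ≠ 0 := (S₁.charpoly_monic.mul S₂.charpoly_monic).ne_zero
  set s : Finset ℂ := cp.roots.toFinset with hs
  have hmem : ∀ z : ℂ, z ∈ s ↔ (eigC S₁ z ∨ eigC S₂ z) := by
    intro z
    simp [hs, hcp, Multiset.mem_toFinset, Polynomial.mem_roots hcp0, Polynomial.IsRoot,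
      Polynomial.eval_mul, mul_eq_zero, eigC,
        S₁.charpoly_monic.ne_zero, S₂.charpoly_monic.ne_zero]
  have hstrip : ∀ z ∈ s, -Real.pi < z.im ∧ z.im ≤ Real.pi := by
    intro z hz
    rcases (hmem z).mp hz with h | h
    · exact he₁ z h
    · exact he₂ z h
  have hinj : Set.InjOn Complex.exp ↑s := by
    intro x hx y hy hxy
    obtain ⟨k, hk⟩ := Complex.exp_eq_exp_iff_exists_int.mp hxy
    have him : x.im = y.im + (k : ℝ) * (2 * Real.pi) := by
      have := congrArg Complex.im hk
      simpa [Complex.add_im, Complex.mul_im, Complex.mul_re] using this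
    obtain ⟨hx1, hx2⟩ := hstrip x hx
    obtain ⟨hy1, hy2⟩ := hstrip y hy
    have hpi : (0 : ℝ) < Real.pi := Real.pi_pos
    have hk0 : k = 0 := by
      by_contra hk0
      have h1 : (1 : ℝ) ≤ |(k : ℝ)| := by
        have := Int.one_le_abs (by omega : k ≠ 0)
        exact_mod_cast by exact_mod_cast (by exact_mod_cast this : (1:ℤ) ≤ |k|)
      have habs : |(k : ℝ) * (2 * Real.pi)| < 2 * Real.pi := by
        have : x.im - y.im = (k : ℝ) * (2 * Real.pi) := by linarith
        rw [← this, abs_sub_lt_iff]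
        constructor <;> linarith
      rw [abs_mul, abs_of_pos (by linarith : (0:ℝ) < 2 * Real.pi)] at habs
      nlinarith
    rw [hk0] at hk
    simpa using hk
  set p : ℂ[X] := Lagrange.interpolate s Complex.exp id with hp
  have hevalp : ∀ z ∈ s, p.eval (Complex.exp z) = z := by
    intro z hz
    exact Lagrange.eval_interpolate_at_node id hinj hz
  have recon : ∀ (u : (Matrix (Fin n) (Fin n) ℂ)ˣ) (d : Fin n → ℂ), (∀ i, d i ∈ s) →
      Polynomial.aeval (NormedSpace.exp ((u : Matrix (Fin n) (Fin n) ℂ)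
        * Matrix.diagonal d * (↑(u⁻¹) : Matrix (Fin n) (Fin n) ℂ))) p = (↑u : Matrix (Fin n) (Fin n) ℂ) * Matrix.diagonal d * (↑(u⁻¹) : Matrix (Fin n) (Fin n) ℂ) := by
    intro u d hd
    rw [Matrix.exp_units_conj, Matrix.exp_diagonal, aeval_conj_aux, aeval_diagonal_aux]
    have hfun : (fun i => p.eval (NormedSpace.exp d i)) = d := by
      funext i
      rw [Pi.coe_exp, ← Complex.exp_eq_exp_ℂ]
      exact hevalp (d i) (hd i)
    rw [hfun]
  have hd₁ : ∀ i, d₁ i ∈ s := fun i =>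
    (hmem (d₁ i)).mpr (Or.inl (by rw [eigC, hS₁]; exact diag_root_aux u₁ d₁ i))
  have hd₂ : ∀ i, d₂ i ∈ s := fun i =>
    (hmem (d₂ i)).mpr (Or.inr (by rw [eigC, hS₂]; exact diag_root_aux u₂ d₂ i))
  calc S₁ = Polynomial.aeval (NormedSpace.exp S₁) p := by rw [hS₁, recon u₁ d₁ hd₁]
    _ = Polynomial.aeval (NormedSpace.exp S₂) p := by rw [hexp]
    _ = S₂ := by rw [hS₂, recon u₂ d₂ hd₂]

lemma exp_map_aux {n : ℕ} (S : Matrix (Fin n) (Fin n) ℝ) :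
    (NormedSpace.exp S).map (algebraMap ℝ ℂ)
      = NormedSpace.exp (S.map (algebraMap ℝ ℂ)) := by
  letI : NormedRing (Matrix (Fin n) (Fin n) ℝ) := Matrix.linftyOpNormedRing
  letI : NormedAlgebra ℝ (Matrix (Fin n) (Fin n) ℝ) := Matrix.linftyOpNormedAlgebra
  letI : NormedAlgebra ℚ (Matrix (Fin n) (Fin n) ℝ) := Matrix.linftyOpNormedAlgebra
  letI : NormedRing (Matrix (Fin n) (Fin n) ℂ) := Matrix.linftyOpNormedRing
  letI : NormedAlgebra ℝ (Matrix (Fin n) (Fin n) ℂ) := Matrix.linftyOpNormedAlgebra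
  letI : NormedAlgebra ℂ (Matrix (Fin n) (Fin n) ℂ) := Matrix.linftyOpNormedAlgebra
  have hcont : Continuous fun A : Matrix (Fin n) (Fin n) ℝ => A.map (algebraMap ℝ ℂ) := by
    apply continuous_matrix
    intro i j
    exact Complex.continuous_ofReal.comp ((continuous_apply j).comp (continuous_apply i))
  have h1 : ((algebraMap ℝ ℂ).mapMatrix : Matrix (Fin n) (Fin n) ℝ →+* Matrix (Fin n) (Fin n) ℂ)
      (NormedSpace.exp S) = NormedSpace.exp ((algebraMap ℝ ℂ).mapMatrix S) :=
    NormedSpace.map_exp _ hcont S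
  have h2 : (NormedSpace.exp : Matrix (Fin n) (Fin n) ℂ → _) = NormedSpace.exp :=
    rfl
  simpa [RingHom.mapMatrix_apply, h2] using h1


end ExpInjAux

/-- **Injectivity of `exp` on semisimple matrices with spectrum in the strip
`−π < Im ≤ π`.** If `S₁, S₂` (real or complex `n × n`) are semisimple, all their
eigenvalues `λ + iμ` satisfy `−π < μ ≤ π`, and `exp S₁ = exp S₂`, then `S₁ = S₂`. -/
theorem exp_injective_on_semisimple_strip (n : ℕ) :
    (∀ S₁ S₂ : Matrix (Fin n) (Fin n) ℝ,
      IsSemisimpleMatR S₁ → IsSemisimpleMatR S₂ →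
      (∀ z : ℂ, eigR S₁ z → -Real.pi < z.im ∧ z.im ≤ Real.pi) →
      (∀ z : ℂ, eigR S₂ z → -Real.pi < z.im ∧ z.im ≤ Real.pi) →
      NormedSpace.exp S₁ = NormedSpace.exp S₂ → S₁ = S₂) ∧
    (∀ S₁ S₂ : Matrix (Fin n) (Fin n) ℂ,
      IsSemisimpleMatC S₁ → IsSemisimpleMatC S₂ →
      (∀ z : ℂ, eigC S₁ z → -Real.pi < z.im ∧ z.im ≤ Real.pi) →
      (∀ z : ℂ, eigC S₂ z → -Real.pi < z.im ∧ z.im ≤ Real.pi) →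
      NormedSpace.exp S₁ = NormedSpace.exp S₂ → S₁ = S₂) := by
  constructor
  · intro S₁ S₂ h₁ h₂ he₁ he₂ hexp
    refine Matrix.map_injective (algebraMap ℝ ℂ).injective ?_
    refine complex_case _ _ h₁ h₂
      (fun z hz => he₁ z ?_) (fun z hz => he₂ z ?_) ?_
    · rw [eigR, ← Matrix.charpoly_map]; exact hz
    · rw [eigR, ← Matrix.charpoly_map]; exact hz
    · rw [← exp_map_aux, ← exp_map_aux, hexp]
  · exact fun S₁ S₂ h₁ h₂ he₁ he₂ hexp => complex_case S₁ S₂ h₁ h₂ he₁ he₂ hexp
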